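/- The 8×8 sub-block conversion matrix H, obtained by vertically stacking the two 4×8 matrices T_4 · E_0 · T_8ᵀ and T_4 · E_1 · T_8ᵀ, is orthogonal: H · Hᵀ = I_8 and Hᵀ · H = I_8. Consequently, for every real 8×8 matrix B̂, conjugation H · B̂ · Hᵀ is an invertible transformation whose inverse is conjugation by Hᵀ. -/

import Mathlib

open Matrix

/-- The orthonormal type-II DCT basis matrix `T_N`. -/
noncomputable def dctMatrix (N : ℕ) : Matrix (Fin N) (Fin N) ℝ :=
  fun i j => Real.sqrt (2 / N) * (if (i : ℕ) = 0 then 1 / Real.sqrt 2 else 1) *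
    Real.cos ((2 * (j : ℕ) + 1) * (i : ℕ) * Real.pi / (2 * N))

/-- The row-selection matrices `E_r ∈ ℝ^{4×8}` for `r ∈ {0,1}`:
`(E_r)_{i,j} = 1` iff `j = i + 4r`. -/
def selMatrix (r : Fin 2) : Matrix (Fin 4) (Fin 8) ℝ :=
  fun i j => if (j : ℕ) = (i : ℕ) + 4 * (r : ℕ) then 1 else 0

/-- The 8×8 sub-block conversion matrix `H`, whose top four rows are
`T_4 * E_0 * T_8ᵀ` and whose bottom four rows are `T_4 * E_1 * T_8ᵀ`. -/
noncomputable def convMatrix : Matrix (Fin 8) (Fin 8) ℝ :=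
  fun i j =>
    if h : (i : ℕ) < 4 then
      (dctMatrix 4 * selMatrix 0 * (dctMatrix 8)ᵀ) ⟨(i : ℕ), h⟩ j
    else
      (dctMatrix 4 * selMatrix 1 * (dctMatrix 8)ᵀ) ⟨(i : ℕ) - 4, by omega⟩ j

open Real Finset

noncomputable def Scos (N : ℕ) (x : ℝ) : ℝ := ∑ j ∈ Finset.range N, Real.cos ((2*j+1)*x)

lemma Scos_key (N : ℕ) (x : ℝ) : 2 * Real.sin x * Scos N x = Real.sin (2*N*x) := by
  have h := Finset.sum_range_sub (f := fun j : ℕ => Real.sin (2*j*x)) N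
  rw [Scos, Finset.mul_sum]
  have : ∀ j ∈ Finset.range N, 2 * Real.sin x * Real.cos ((2*j+1)*x)
      = Real.sin (2*(j+1)*x) - Real.sin (2*j*x) := by
    intro j _
    rw [Real.sin_sub_sin]
    ring_nf
  rw [Finset.sum_congr rfl this, Finset.sum_sub_distrib]
  simpa using h

lemma Scos_zero_of (N : ℕ) (x : ℝ) (h1 : Real.sin x ≠ 0) (h2 : Real.sin (2*N*x) = 0) :
    Scos N x = 0 := by
  have h := Scos_key N x
  rw [h2] at h
  have h2' : (2:ℝ) * Real.sin x ≠ 0 := mul_ne_zero two_ne_zero h1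
  exact (mul_eq_zero.mp h).resolve_left h2'

lemma Scos_int (N : ℕ) (hN : 0 < N) (m : ℤ) (hm0 : m ≠ 0) (hm : |m| < 2*N) :
    Scos N ((m : ℝ) * Real.pi / (2*N)) = 0 := by
  apply Scos_zero_of
  · intro hs
    rw [Real.sin_eq_zero_iff] at hs
    obtain ⟨n, hn⟩ := hs
    have hpi := Real.pi_pos
    have hNr : (0:ℝ) < 2*(N:ℝ) := by positivity
    have key : ((n * (2*N) : ℤ) : ℝ) = (m:ℝ) := by
      field_simp at hn
      push_cast
      have h9 : ((n:ℝ) * (2*N)) * π = (m:ℝ) * π := by linear_combination π * hn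
      exact mul_right_cancel₀ (ne_of_gt hpi) h9
    have key' : n * (2*N) = m := by exact_mod_cast key
    rcases abs_lt.mp hm with ⟨hl, hr⟩
    rcases lt_trichotomy n 0 with h | h | h
    · nlinarith [key']
    · simp [h] at key'; exact hm0 key'.symm
    · nlinarith [key']
  · have : 2*(N:ℝ) * ((m:ℝ) * Real.pi / (2*N)) = m * Real.pi := by
      field_simp
    rw [this]
    exact Real.sin_int_mul_pi m

lemma Scos_at_zero (N : ℕ) : Scos N 0 = N := by
  simp [Scos]

lemma cos_mul_cos' (a b : ℝ) : Real.cos a * Real.cos b = (Real.cos (a+b) + Real.cos (a-b))/2 := by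
  rw [Real.cos_add, Real.cos_sub]; ring

lemma dct_orth (N : ℕ) (hN : 0 < N) : dctMatrix N * (dctMatrix N)ᵀ = 1 := by
  have hNr : (0:ℝ) < N := by exact_mod_cast hN
  ext i k
  rw [mul_apply, one_apply]
  simp only [transpose_apply, dctMatrix]
  set ci : ℝ := if (i:ℕ)=0 then 1/Real.sqrt 2 else 1 with hci
  set ck : ℝ := if (k:ℕ)=0 then 1/Real.sqrt 2 else 1 with hck
  set x1 : ℝ := (((i:ℕ):ℝ)+((k:ℕ):ℝ))*π/(2*N) with hx1
  set x2 : ℝ := (((i:ℕ):ℝ)-((k:ℕ):ℝ))*π/(2*N) with hx2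
  have hs2 : Real.sqrt (2/N) * Real.sqrt (2/N) = 2/N := Real.mul_self_sqrt (by positivity)
  have hterm : ∀ j : Fin N,
      (Real.sqrt (2/N) * ci * Real.cos ((2*(j:ℕ)+1)*((i:ℕ):ℝ)*π/(2*N))) *
      (Real.sqrt (2/N) * ck * Real.cos ((2*(j:ℕ)+1)*((k:ℕ):ℝ)*π/(2*N)))
      = (2/N)*(ci*ck) * ((Real.cos ((2*(j:ℕ)+1)*x1) + Real.cos ((2*(j:ℕ)+1)*x2))/2) := by
    intro j
    have e1 : (2*((j:ℕ):ℝ)+1)*((i:ℕ):ℝ)*π/(2*N) + (2*((j:ℕ):ℝ)+1)*((k:ℕ):ℝ)*π/(2*N)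
        = (2*((j:ℕ):ℝ)+1)*x1 := by rw [hx1]; ring
    have e2 : (2*((j:ℕ):ℝ)+1)*((i:ℕ):ℝ)*π/(2*N) - (2*((j:ℕ):ℝ)+1)*((k:ℕ):ℝ)*π/(2*N)
        = (2*((j:ℕ):ℝ)+1)*x2 := by rw [hx2]; ring
    calc (Real.sqrt (2/N) * ci * Real.cos ((2*(j:ℕ)+1)*((i:ℕ):ℝ)*π/(2*N))) *
      (Real.sqrt (2/N) * ck * Real.cos ((2*(j:ℕ)+1)*((k:ℕ):ℝ)*π/(2*N)))
        = (Real.sqrt (2/N) * Real.sqrt (2/N)) * (ci*ck) *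
          (Real.cos ((2*(j:ℕ)+1)*((i:ℕ):ℝ)*π/(2*N)) * Real.cos ((2*(j:ℕ)+1)*((k:ℕ):ℝ)*π/(2*N))) := by
          ring
      _ = (2/N)*(ci*ck) * ((Real.cos ((2*(j:ℕ)+1)*x1) + Real.cos ((2*(j:ℕ)+1)*x2))/2) := by
          rw [hs2, cos_mul_cos', e1, e2]
  rw [Finset.sum_congr rfl (fun j _ => hterm j), ← Finset.mul_sum]
  have hfin : ∀ x : ℝ, ∑ j : Fin N, Real.cos ((2*(j:ℕ)+1)*x) = Scos N x := by
    intro x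
    rw [Scos]
    exact Fin.sum_univ_eq_sum_range (fun j => Real.cos ((2*(j:ℕ)+1)*x)) N
  have hsplit : ∑ j : Fin N, ((Real.cos ((2*(j:ℕ)+1)*x1) + Real.cos ((2*(j:ℕ)+1)*x2))/2)
      = (Scos N x1 + Scos N x2)/2 := by
    rw [← hfin x1, ← hfin x2, ← Finset.sum_add_distrib, Finset.sum_div]
  rw [hsplit]
  have hi := i.isLt
  have hk := k.isLt
  by_cases hik : i = k
  · subst hik
    have hx2' : x2 = 0 := by rw [hx2]; ring
    rw [if_pos rfl, hx2', Scos_at_zero]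
    by_cases hi0 : (i:ℕ) = 0
    · have hx1' : x1 = 0 := by rw [hx1, hi0]; push_cast; ring
      rw [hx1', Scos_at_zero, hci, hck, if_pos hi0]
      have hs : Real.sqrt 2 * Real.sqrt 2 = 2 := Real.mul_self_sqrt (by norm_num)
      have hs0 : Real.sqrt 2 ≠ 0 := by positivity
      field_simp
      nlinarith [hs]
    · have hm : Scos N x1 = 0 := by
        have h := Scos_int N hN (((i:ℕ):ℤ) + ((i:ℕ):ℤ)) (by omega)
          (by rw [abs_lt]; constructor <;> [omega; omega])
        rw [hx1]
        convert h using 2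
        push_cast
        ring
      rw [hm, hci, hck, if_neg hi0]
      field_simp
      ring
  · rw [if_neg hik]
    have hik' : (i:ℕ) ≠ (k:ℕ) := fun h => hik (Fin.ext h)
    have hm1 : Scos N x1 = 0 := by
      have h := Scos_int N hN (((i:ℕ):ℤ) + ((k:ℕ):ℤ)) (by omega)
        (by rw [abs_lt]; constructor <;> [omega; omega])
      rw [hx1]; convert h using 2; push_cast; ring
    have hm2 : Scos N x2 = 0 := by
      have h := Scos_int N hN (((i:ℕ):ℤ) - ((k:ℕ):ℤ)) (by omega)
        (by rw [abs_lt]; constructor <;> [omega; omega])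
      rw [hx2]; convert h using 2; push_cast; ring
    rw [hm1, hm2]
    ring

lemma dct_orth' (N : ℕ) (hN : 0 < N) : (dctMatrix N)ᵀ * dctMatrix N = 1 :=
  mul_eq_one_comm.mp (dct_orth N hN)

lemma sel_mul (r s : Fin 2) :
    selMatrix r * (selMatrix s)ᵀ = if r = s then (1 : Matrix (Fin 4) (Fin 4) ℝ) else 0 := by
  fin_cases r <;> fin_cases s <;> ext a b <;> fin_cases a <;> fin_cases b <;>
    simp (config := { decide := true }) [mul_apply, selMatrix, Fin.sum_univ_eight, one_apply]

lemma block_mul (r s : Fin 2) :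
    (dctMatrix 4 * selMatrix r * (dctMatrix 8)ᵀ) * (dctMatrix 4 * selMatrix s * (dctMatrix 8)ᵀ)ᵀ
      = if r = s then (1 : Matrix (Fin 4) (Fin 4) ℝ) else 0 := by
  rw [transpose_mul, transpose_mul, transpose_transpose]
  have : (dctMatrix 4 * selMatrix r * (dctMatrix 8)ᵀ) * ((dctMatrix 8) * ((selMatrix s)ᵀ * (dctMatrix 4)ᵀ))
      = dctMatrix 4 * ((selMatrix r * ((dctMatrix 8)ᵀ * dctMatrix 8)) * (selMatrix s)ᵀ) * (dctMatrix 4)ᵀ := by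
    simp only [Matrix.mul_assoc]
  rw [this, dct_orth' 8 (by norm_num), Matrix.mul_one, sel_mul]
  by_cases h : r = s
  · simp [h, Matrix.mul_one, dct_orth 4 (by norm_num)]
  · simp [h]

lemma conv_mul_transpose : convMatrix * convMatrixᵀ = 1 := by
  ext i k
  rw [mul_apply, one_apply]
  by_cases hi : (i:ℕ) < 4 <;> by_cases hk : (k:ℕ) < 4
  · have : ∑ j, convMatrix i j * convMatrixᵀ j k
        = ((dctMatrix 4 * selMatrix 0 * (dctMatrix 8)ᵀ) *
           (dctMatrix 4 * selMatrix 0 * (dctMatrix 8)ᵀ)ᵀ) ⟨(i:ℕ), hi⟩ ⟨(k:ℕ), hk⟩ := by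
      rw [mul_apply]
      refine Finset.sum_congr rfl fun j _ => ?_
      simp only [convMatrix, dif_pos hi, dif_pos hk, transpose_apply]
    rw [this, block_mul, if_pos rfl, one_apply]
    simp [Fin.ext_iff]
  · have : ∑ j, convMatrix i j * convMatrixᵀ j k
        = ((dctMatrix 4 * selMatrix 0 * (dctMatrix 8)ᵀ) *
           (dctMatrix 4 * selMatrix 1 * (dctMatrix 8)ᵀ)ᵀ) ⟨(i:ℕ), hi⟩ ⟨(k:ℕ) - 4, by omega⟩ := by
      rw [mul_apply]
      refine Finset.sum_congr rfl fun j _ => ?_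
      simp only [convMatrix, dif_pos hi, dif_neg hk, transpose_apply]
    rw [this, block_mul, if_neg (by decide), if_neg (by omega : ¬ i = k)]
    rfl
  · have : ∑ j, convMatrix i j * convMatrixᵀ j k
        = ((dctMatrix 4 * selMatrix 1 * (dctMatrix 8)ᵀ) *
           (dctMatrix 4 * selMatrix 0 * (dctMatrix 8)ᵀ)ᵀ) ⟨(i:ℕ) - 4, by omega⟩ ⟨(k:ℕ), hk⟩ := by
      rw [mul_apply]
      refine Finset.sum_congr rfl fun j _ => ?_
      simp only [convMatrix, dif_neg hi, dif_pos hk, transpose_apply]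
    rw [this, block_mul, if_neg (by decide), if_neg (by omega : ¬ i = k)]
    rfl
  · have : ∑ j, convMatrix i j * convMatrixᵀ j k
        = ((dctMatrix 4 * selMatrix 1 * (dctMatrix 8)ᵀ) *
           (dctMatrix 4 * selMatrix 1 * (dctMatrix 8)ᵀ)ᵀ) ⟨(i:ℕ) - 4, by omega⟩ ⟨(k:ℕ) - 4, by omega⟩ := by
      rw [mul_apply]
      refine Finset.sum_congr rfl fun j _ => ?_
      simp only [convMatrix, dif_neg hi, dif_neg hk, transpose_apply]
    rw [this, block_mul, if_pos rfl, one_apply]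
    have hi8 := i.isLt
    have hk8 := k.isLt
    by_cases h : i = k
    · simp [h]
    · rw [if_neg (by simp [Fin.ext_iff]; omega), if_neg h]

/-- The sub-block conversion matrix `H` is orthogonal, and consequently conjugation by `H`
is inverted by conjugation by `Hᵀ`. -/
theorem convMatrix_orthogonal :
    convMatrix * convMatrixᵀ = 1 ∧ convMatrixᵀ * convMatrix = 1 ∧
      ∀ B : Matrix (Fin 8) (Fin 8) ℝ,
        convMatrixᵀ * (convMatrix * B * convMatrixᵀ) * convMatrix = B := by
  have h1 := conv_mul_transpose
  have h2 : convMatrixᵀ * convMatrix = 1 := mul_eq_one_comm.mp h1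
  refine ⟨h1, h2, fun B => ?_⟩
  calc convMatrixᵀ * (convMatrix * B * convMatrixᵀ) * convMatrix
      = (convMatrixᵀ * convMatrix) * B * (convMatrixᵀ * convMatrix) := by
        simp only [Matrix.mul_assoc]
    _ = B := by rw [h2, Matrix.one_mul, Matrix.mul_one]
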